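/- Let F be a diagonalizable linear operator of degree zero on a finite-dimensional graded complex vector space V = ⊕_{i∈Z} V_i, and let q > 1 be a real number. Assume: (a) every eigenvalue of F on V_i has absolute value q^{i/2}; (b) for every k ≥ 0 the supertrace Σ_i (-1)^i Tr(F^k|_{V_i}) equals Q(q^k) for a fixed Laurent polynomial Q with integer coefficients. Then V_{2i+1} = 0 for all i, F acts on V_{2i} as multiplication by q^i, and Q(q^k) = Σ_i dim(V_{2i}) q^{ik} for all k, i.e. Q(X) = Σ_i dim(V_{2i}) X^i. -/

import Mathlib

open scoped BigOperators

noncomputable section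

lemma eigen_pow_apply {W : Type*} [AddCommGroup W] [Module ℂ W]
    (f : Module.End ℂ W) {μ : ℂ} {x : W} (hx : x ∈ f.eigenspace μ) (m : ℕ) :
    (f ^ m) x = μ ^ m • x := by
  induction m with
  | zero => simp
  | succ n ih =>
    rw [pow_succ, Module.End.mul_apply, Module.End.mem_eigenspace_iff.1 hx, map_smul, ih,
      smul_smul, ← pow_succ']

lemma trace_pow_diag {W : Type*} [AddCommGroup W] [Module ℂ W] [FiniteDimensional ℂ W]
    (f : Module.End ℂ W) (hdiag : (⨆ μ : ℂ, f.eigenspace μ) = ⊤) (k : ℕ) :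
    LinearMap.trace ℂ W (f ^ k) =
      ∑ μ ∈ f.finite_hasEigenvalue.toFinset,
        (Module.finrank ℂ (f.eigenspace μ) : ℂ) * μ ^ k := by
  have hint : DirectSum.IsInternal f.eigenspace :=
    (DirectSum.isInternal_submodule_iff_iSupIndep_and_iSup_eq_top _).2
      ⟨f.eigenspaces_iSupIndep, hdiag⟩
  have hfin : {μ : ℂ | f.eigenspace μ ≠ ⊥}.Finite := f.finite_hasEigenvalue
  have hmaps : ∀ μ : ℂ, Set.MapsTo (f ^ k) (f.eigenspace μ) (f.eigenspace μ) := by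
    intro μ x hx
    rw [SetLike.mem_coe, Module.End.mem_eigenspace_iff]
    rw [eigen_pow_apply f hx k, map_smul, Module.End.mem_eigenspace_iff.1 hx,
      smul_smul, smul_smul, mul_comm]
  rw [LinearMap.trace_eq_sum_trace_restrict' hint hfin hmaps]
  refine Finset.sum_congr rfl fun μ hμ => ?_
  have hres : (f ^ k).restrict (hmaps μ) = (μ ^ k : ℂ) • LinearMap.id := by
    ext x
    change (f ^ k) (x : W) = _
    simpa using eigen_pow_apply f x.2 k
  rw [hres, map_smul, LinearMap.trace_id, smul_eq_mul, mul_comm]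

open Polynomial in
lemma exp_sum_eq_zero (t : Finset ℂ) (c : ℂ → ℂ)
    (h : ∀ k : ℕ, ∑ x ∈ t, c x * x ^ k = 0) : ∀ μ ∈ t, c μ = 0 := by
  intro μ hμ
  classical
  set p : Polynomial ℂ := ∏ x ∈ t.erase μ, (X - C x) with hp
  have key : ∑ x ∈ t, c x * p.eval x = 0 := by
    have : ∀ x ∈ t, c x * p.eval x =
        ∑ n ∈ Finset.range (p.natDegree + 1), c x * (p.coeff n * x ^ n) := by
      intro x _
      rw [Polynomial.eval_eq_sum_range, Finset.mul_sum]
    rw [Finset.sum_congr rfl this, Finset.sum_comm]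
    refine Finset.sum_eq_zero fun n _ => ?_
    have : ∀ x ∈ t, c x * (p.coeff n * x ^ n) = p.coeff n * (c x * x ^ n) := by
      intro x _; ring
    rw [Finset.sum_congr rfl this, ← Finset.mul_sum, h n, mul_zero]
  have hzero : ∀ x ∈ t, x ≠ μ → c x * p.eval x = 0 := by
    intro x hx hne
    have : p.eval x = 0 := by
      rw [hp, Polynomial.eval_prod]
      exact Finset.prod_eq_zero (Finset.mem_erase.2 ⟨hne, hx⟩) (by simp)
    simp [this]
  rw [Finset.sum_eq_single_of_mem μ hμ hzero] at key
  have hpe : p.eval μ ≠ 0 := by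
    rw [hp, Polynomial.eval_prod]
    refine Finset.prod_ne_zero_iff.2 fun x hx => ?_
    have := (Finset.mem_erase.1 hx).1
    simp only [Polynomial.eval_sub, Polynomial.eval_X, Polynomial.eval_C, sub_ne_zero]
    exact fun h => (this h.symm).elim
  exact (mul_eq_zero.1 key).resolve_right hpe

/-- Let `V = ⊕_{i∈ℤ} V_i` be a finite-dimensional graded complex vector space
(all pieces outside a finite set `s` trivial), `F` a degree-zero diagonalizable
operator, `q > 1` real. If every eigenvalue of `F` on `V_i` has absolute value
`q^{i/2}`, and for all `k ≥ 0` the supertrace of `F^k` equals `Q(q^k)` for a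
fixed Laurent polynomial `Q = ∑_i a_i X^i` with integer coefficients, then the
odd pieces vanish, `F` acts on `V_{2i}` as multiplication by `q^i`, and
`a_i = dim V_{2i}`. -/
theorem graded_purity_lemma
    (V : ℤ → Type*) [∀ i, AddCommGroup (V i)] [∀ i, Module ℂ (V i)]
    [∀ i, FiniteDimensional ℂ (V i)]
    (s : Finset ℤ) (hs : ∀ i ∉ s, Subsingleton (V i))
    (F : ∀ i, Module.End ℂ (V i))
    (hdiag : ∀ i, (⨆ μ : ℂ, Module.End.eigenspace (F i) μ) = ⊤)
    (q : ℝ) (hq : 1 < q)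
    (habs : ∀ (i : ℤ) (μ : ℂ), Module.End.HasEigenvalue (F i) μ →
      ‖μ‖ = q ^ ((i : ℝ) / 2))
    (a : ℤ →₀ ℤ)
    (htr : ∀ k : ℕ,
      (∑ i ∈ s, (-1 : ℂ) ^ i * LinearMap.trace ℂ (V i) ((F i) ^ k)) =
        ∑ i ∈ a.support, (a i : ℂ) * ((q : ℂ)) ^ (i * (k : ℤ))) :
    (∀ i : ℤ, Subsingleton (V (2 * i + 1))) ∧
      (∀ (i : ℤ) (x : V (2 * i)), F (2 * i) x = ((q : ℂ) ^ i) • x) ∧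
      (∀ i : ℤ, a i = (Module.finrank ℂ (V (2 * i)) : ℤ)) := by
  classical
  have hq0 : (0 : ℝ) < q := lt_trans one_pos hq
  have hqC : (q : ℂ) ≠ 0 := by exact_mod_cast hq0.ne'
  -- injectivity of exponents
  have hrpow_inj : ∀ x y : ℝ, q ^ x = q ^ y → x = y := by
    intro x y hxy
    exact le_antisymm ((Real.rpow_le_rpow_left_iff hq).1 hxy.le)
      ((Real.rpow_le_rpow_left_iff hq).1 hxy.ge)
  have hqabs : ∀ j : ℤ, ‖((q : ℂ) ^ j)‖ = q ^ ((j : ℝ)) := by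
    intro j
    rw [norm_zpow, Complex.norm_of_nonneg hq0.le, ← Real.rpow_intCast]
  -- if μ is an eigenvalue of F i with μ = q^j then i = 2j
  have hqe : ∀ (i j : ℤ) (μ : ℂ), Module.End.HasEigenvalue (F i) μ →
      (q : ℂ) ^ j = μ → i = 2 * j := by
    intro i j μ hμ hjμ
    have h1 : q ^ ((j : ℝ)) = q ^ ((i : ℝ) / 2) := by
      rw [← hqabs j, hjμ, habs i μ hμ]
    have h2 : (j : ℝ) = (i : ℝ) / 2 := hrpow_inj _ _ h1
    have : ((2 * j : ℤ) : ℝ) = ((i : ℤ) : ℝ) := by push_cast; linarith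
    exact (Int.cast_injective this).symm
  -- two graded pieces sharing an eigenvalue have the same index
  have hsame : ∀ (i₁ i₂ : ℤ) (μ : ℂ), Module.End.HasEigenvalue (F i₁) μ →
      Module.End.HasEigenvalue (F i₂) μ → i₁ = i₂ := by
    intro i₁ i₂ μ h1 h2
    have := (habs i₁ μ h1).symm.trans (habs i₂ μ h2)
    have h3 : (i₁ : ℝ) / 2 = (i₂ : ℝ) / 2 := hrpow_inj _ _ this
    have : ((i₁ : ℤ) : ℝ) = ((i₂ : ℤ) : ℝ) := by linarith
    exact Int.cast_injective this
  have hqj_inj : ∀ j₁ j₂ : ℤ, (q : ℂ) ^ j₁ = (q : ℂ) ^ j₂ → j₁ = j₂ := by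
    intro j₁ j₂ h
    have : q ^ ((j₁ : ℝ)) = q ^ ((j₂ : ℝ)) := by rw [← hqabs, ← hqabs, h]
    exact_mod_cast hrpow_inj _ _ this
  -- positive eigenspace dimension
  have hfrpos : ∀ (i : ℤ) (μ : ℂ), Module.End.HasEigenvalue (F i) μ →
      0 < Module.finrank ℂ (Module.End.eigenspace (F i) μ) := by
    intro i μ hμ
    rw [Module.finrank_pos_iff]
    obtain ⟨v, hv⟩ := hμ.exists_hasEigenvector
    exact nontrivial_of_ne (⟨v, hv.1⟩ : Module.End.eigenspace (F i) μ) 0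
      (by simp [Subtype.ext_iff, hv.2])
  have hfr0 : ∀ (i : ℤ) (μ : ℂ), ¬ Module.End.HasEigenvalue (F i) μ →
      Module.finrank ℂ (Module.End.eigenspace (F i) μ) = 0 := by
    intro i μ hμ
    rw [not_not.1 (fun h => hμ (Module.End.hasEigenvalue_iff.2 h))]
    exact finrank_bot ℂ (V i)
  have hmemE : ∀ (i : ℤ) (μ : ℂ),
      μ ∈ (F i).finite_hasEigenvalue.toFinset ↔ Module.End.HasEigenvalue (F i) μ := by
    intro i μ; exact Set.Finite.mem_toFinset _
  set T : Finset ℂ := s.biUnion (fun i => (F i).finite_hasEigenvalue.toFinset)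
      ∪ a.support.image (fun j => (q : ℂ) ^ j) with hT
  set c : ℂ → ℂ := fun μ =>
    (∑ i ∈ s, (-1 : ℂ) ^ i * (Module.finrank ℂ (Module.End.eigenspace (F i) μ) : ℂ))
      - ∑ j ∈ a.support.filter (fun j => (q : ℂ) ^ j = μ), (a j : ℂ) with hc
  have hsum : ∀ k : ℕ, ∑ μ ∈ T, c μ * μ ^ k = 0 := by
    intro k
    have hsplit : ∀ μ ∈ T, c μ * μ ^ k =
        (∑ i ∈ s, (-1 : ℂ) ^ i *
          ((Module.finrank ℂ (Module.End.eigenspace (F i) μ) : ℂ) * μ ^ k))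
        - ∑ j ∈ a.support.filter (fun j => (q : ℂ) ^ j = μ), (a j : ℂ) * μ ^ k := by
      intro μ _
      simp only [hc, sub_mul, Finset.sum_mul, mul_assoc]
    rw [Finset.sum_congr rfl hsplit, Finset.sum_sub_distrib]
    have h1 : ∑ μ ∈ T, (∑ i ∈ s, (-1 : ℂ) ^ i *
        ((Module.finrank ℂ (Module.End.eigenspace (F i) μ) : ℂ) * μ ^ k)) =
        ∑ i ∈ s, (-1 : ℂ) ^ i * LinearMap.trace ℂ (V i) ((F i) ^ k) := by
      rw [Finset.sum_comm]
      refine Finset.sum_congr rfl fun i hi => ?_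
      rw [← Finset.mul_sum]
      congr 1
      have hsub : (F i).finite_hasEigenvalue.toFinset ⊆ T := by
        rw [hT]
        exact (Finset.subset_biUnion_of_mem (fun i => (F i).finite_hasEigenvalue.toFinset) hi).trans Finset.subset_union_left
      rw [trace_pow_diag (F i) (hdiag i) k]
      exact (Finset.sum_subset hsub fun μ _ hμ => by
        rw [hfr0 i μ (fun h => hμ ((hmemE i μ).2 h))]; simp).symm
    have h2 : ∑ μ ∈ T, ∑ j ∈ a.support.filter (fun j => (q : ℂ) ^ j = μ), (a j : ℂ) * μ ^ k =
        ∑ j ∈ a.support, (a j : ℂ) * ((q : ℂ)) ^ (j * (k : ℤ)) := by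
      have : ∀ μ ∈ T, ∑ j ∈ a.support.filter (fun j => (q : ℂ) ^ j = μ), (a j : ℂ) * μ ^ k =
          ∑ j ∈ a.support.filter (fun j => (q : ℂ) ^ j = μ),
            (a j : ℂ) * ((q : ℂ)) ^ (j * (k : ℤ)) := by
        intro μ _
        refine Finset.sum_congr rfl fun j hj => ?_
        have hjμ := (Finset.mem_filter.1 hj).2
        rw [← hjμ, zpow_mul, zpow_natCast]
      rw [Finset.sum_congr rfl this]
      exact Finset.sum_fiberwise_of_maps_to (fun j hj => by
        rw [hT]
        exact Finset.mem_union_right _ (Finset.mem_image_of_mem _ hj)) _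
    rw [h1, h2, htr k, sub_self]
  have hc0 : ∀ μ ∈ T, c μ = 0 := exp_sum_eq_zero T c hsum
  -- the key identity at each μ ∈ T
  have hkey : ∀ μ ∈ T,
      (∑ i ∈ s, (-1 : ℂ) ^ i * (Module.finrank ℂ (Module.End.eigenspace (F i) μ) : ℂ)) =
      ∑ j ∈ a.support.filter (fun j => (q : ℂ) ^ j = μ), (a j : ℂ) := by
    intro μ hμ
    have h := hc0 μ hμ
    simp only [hc] at h
    exact sub_eq_zero.1 h
  -- sum over s collapses to the single index n when μ is an eigenvalue of F n
  have hfirst : ∀ n : ℤ, n ∈ s → ∀ μ : ℂ, Module.End.HasEigenvalue (F n) μ →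
      (∑ i ∈ s, (-1 : ℂ) ^ i * (Module.finrank ℂ (Module.End.eigenspace (F i) μ) : ℂ)) =
        (-1 : ℂ) ^ n * (Module.finrank ℂ (Module.End.eigenspace (F n) μ) : ℂ) := by
    intro n hn μ hμ
    refine Finset.sum_eq_single_of_mem n hn fun i hi hne => ?_
    by_cases h : Module.End.HasEigenvalue (F i) μ
    · exact absurd (hsame i n μ h hμ) hne
    · rw [hfr0 i μ h]; simp
  have hmes : ∀ n : ℤ, Nontrivial (V n) → n ∈ s := by
    intro n hn
    by_contra h
    haveI := hn
    exact not_subsingleton (V n) (hs n h)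
  have hmemT : ∀ (n : ℤ) (μ : ℂ), n ∈ s → Module.End.HasEigenvalue (F n) μ → μ ∈ T := by
    intro n μ hn hμ
    rw [hT]
    exact Finset.mem_union_left _ (Finset.mem_biUnion.2 ⟨n, hn, (hmemE n μ).2 hμ⟩)
  have hneg_even : ∀ i : ℤ, (-1 : ℂ) ^ (2 * i) = 1 := by
    intro i
    rw [zpow_mul]
    norm_num
  -- every eigenvalue of F (2i) is q^i
  have heigval : ∀ (i : ℤ) (μ : ℂ), Module.End.HasEigenvalue (F (2 * i)) μ →
      μ = (q : ℂ) ^ i := by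
    intro i μ hμ
    have hnont : Nontrivial (V (2 * i)) := by
      obtain ⟨v, hv⟩ := hμ.exists_hasEigenvector
      exact nontrivial_of_ne v 0 hv.2
    have hnmem := hmes _ hnont
    have h := hkey μ (hmemT _ μ hnmem hμ)
    rw [hfirst _ hnmem μ hμ, hneg_even i, one_mul] at h
    have hpos := hfrpos _ μ hμ
    have hne : (a.support.filter (fun j => (q : ℂ) ^ j = μ)).Nonempty := by
      by_contra hempty
      rw [Finset.not_nonempty_iff_eq_empty] at hempty
      rw [hempty, Finset.sum_empty] at h
      exact absurd (Nat.cast_eq_zero.1 h) hpos.ne'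
    obtain ⟨j, hj⟩ := hne
    have hjq := (Finset.mem_filter.1 hj).2
    have h2 : 2 * i = 2 * j := hqe _ j μ hμ hjq
    have h3 : j = i := by omega
    rw [← hjq, h3]
  have htop : ∀ i : ℤ, Module.End.eigenspace (F (2 * i)) ((q : ℂ) ^ i) = ⊤ := by
    intro i
    refine le_antisymm le_top ?_
    rw [← hdiag (2 * i)]
    refine iSup_le fun μ => ?_
    by_cases hμ : Module.End.HasEigenvalue (F (2 * i)) μ
    · rw [heigval i μ hμ]
    · rw [not_not.1 ((not_congr Module.End.hasEigenvalue_iff).1 hμ)]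
      exact bot_le
  refine ⟨?_, ?_, ?_⟩
  · -- odd pieces vanish
    intro i
    by_contra hns
    rw [not_subsingleton_iff_nontrivial] at hns
    haveI := hns
    have hnmem : (2 * i + 1) ∈ s := hmes _ hns
    obtain ⟨μ, hμ⟩ := Module.End.exists_eigenvalue (F (2 * i + 1))
    have hμT : μ ∈ T := hmemT _ μ hnmem hμ
    have hflt : a.support.filter (fun j => (q : ℂ) ^ j = μ) = ∅ := by
      rw [Finset.filter_eq_empty_iff]
      intro j _ hj
      have := hqe _ j μ hμ hj
      omega
    have h := hkey μ hμT
    rw [hfirst _ hnmem μ hμ, hflt, Finset.sum_empty] at h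
    have hne : (-1 : ℂ) ^ (2 * i + 1) ≠ 0 := zpow_ne_zero _ (by norm_num)
    have h0 : (Module.finrank ℂ (Module.End.eigenspace (F (2 * i + 1)) μ) : ℂ) = 0 :=
      (mul_eq_zero.1 h).resolve_left hne
    exact absurd (Nat.cast_eq_zero.1 h0) (hfrpos _ μ hμ).ne'
  · -- F acts on V (2i) as q^i
    intro i x
    have hx : x ∈ Module.End.eigenspace (F (2 * i)) ((q : ℂ) ^ i) := by
      rw [htop i]; trivial
    exact Module.End.mem_eigenspace_iff.1 hx
  · -- a i = dim V (2i)
    intro i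
    by_cases hcase : i ∈ a.support ∨ Nontrivial (V (2 * i))
    · have hμT : ((q : ℂ) ^ i) ∈ T := by
        rcases hcase with h | h
        · rw [hT]
          exact Finset.mem_union_right _ (Finset.mem_image_of_mem _ h)
        · have hnmem := hmes _ h
          haveI := h
          obtain ⟨μ, hμ⟩ := Module.End.exists_eigenvalue (F (2 * i))
          have hv := heigval i μ hμ
          exact hv ▸ hmemT _ μ hnmem hμ
      have h := hkey _ hμT
      have hfilter : a.support.filter (fun j => (q : ℂ) ^ j = (q : ℂ) ^ i) =
          a.support.filter (fun j => j = i) := by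
        exact Finset.filter_congr fun j _ =>
          ⟨fun hh => hqj_inj _ _ hh, fun hh => by rw [hh]⟩
      have hrhs : ∑ j ∈ a.support.filter (fun j => (q : ℂ) ^ j = (q : ℂ) ^ i), (a j : ℂ) =
          (a i : ℂ) := by
        rw [hfilter, Finset.filter_eq']
        by_cases hi : i ∈ a.support
        · rw [if_pos hi, Finset.sum_singleton]
        · rw [if_neg hi, Finset.sum_empty, Finsupp.notMem_support_iff.1 hi]
          simp
      rw [hrhs] at h
      have hlhs : (∑ i' ∈ s, (-1 : ℂ) ^ i' *
          (Module.finrank ℂ (Module.End.eigenspace (F i') ((q : ℂ) ^ i)) : ℂ)) =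
          (Module.finrank ℂ (V (2 * i)) : ℂ) := by
        by_cases hn : (2 * i) ∈ s
        · rw [Finset.sum_eq_single_of_mem (2 * i) hn fun i' hi' hne => ?_]
          · rw [hneg_even i, one_mul, htop i, finrank_top]
          · by_cases hh : Module.End.HasEigenvalue (F i') ((q : ℂ) ^ i)
            · exact absurd (hqe i' i _ hh rfl) hne
            · rw [hfr0 i' _ hh]; simp
        · rw [Finset.sum_eq_zero fun i' hi' => ?_]
          · haveI := hs _ hn
            rw [Module.finrank_zero_of_subsingleton]
            simp
          · by_cases hh : Module.End.HasEigenvalue (F i') ((q : ℂ) ^ i)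
            · exact absurd (hqe i' i _ hh rfl ▸ hi') hn
            · rw [hfr0 i' _ hh]; simp
      rw [hlhs] at h
      exact_mod_cast h.symm
    · push_neg at hcase
      obtain ⟨hi, hnt⟩ := hcase
      haveI := hnt
      rw [Finsupp.notMem_support_iff.1 hi, Module.finrank_zero_of_subsingleton]
      simp
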